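/- Let I and I″ be disjoint bounded closed intervals in ℝ with dist(I, I″) ≥ |I″| > 0, let I′ ⊆ I″, and define f(x) = ∫_I |x − y|^{−2} dy for x ∉ I. Then for every x′ ∈ I′ and every x″ ∈ I″ one has f(x′) ≤ 4 · f(x″). -/

import Mathlib

/-- `f(x) = ∫_I |x - y|^{-2} dy` for `I = [a,b]`. -/
noncomputable def fInt (a b : ℝ) (x : ℝ) : ℝ := ∫ y in a..b, ((x - y) ^ 2)⁻¹

lemma fInt_eq (a b x : ℝ) (hab : a ≤ b) (h : x < a ∨ b < x) :
    fInt a b x = (b - a) / ((x - a) * (x - b)) := by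
  have hne : ∀ y ∈ Set.uIcc a b, x - y ≠ 0 := by
    intro y hy
    rw [Set.uIcc_of_le hab] at hy
    rcases h with h | h
    · have : x < y := lt_of_lt_of_le h hy.1
      linarith
    · have : y < x := lt_of_le_of_lt hy.2 h
      linarith
  have hderiv : ∀ y ∈ Set.uIcc a b,
      HasDerivAt (fun t => (x - t)⁻¹) (((x - y) ^ 2)⁻¹) y := by
    intro y hy
    have h1 : HasDerivAt (fun t : ℝ => x - t) (-1) y := by
      simpa using (hasDerivAt_id y).const_sub x
    have h2 := h1.inv (hne y hy)
    exact h2.congr_deriv (by simp)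
  have hcont : IntervalIntegrable (fun y => ((x - y) ^ 2)⁻¹) MeasureTheory.volume a b := by
    apply ContinuousOn.intervalIntegrable
    apply ContinuousOn.inv₀
    · fun_prop
    · intro y hy
      exact pow_ne_zero 2 (hne y hy)
  have := intervalIntegral.integral_eq_sub_of_hasDerivAt hderiv hcont
  rw [fInt, this]
  have ha : x - a ≠ 0 := hne a (Set.left_mem_uIcc)
  have hb : x - b ≠ 0 := hne b (Set.right_mem_uIcc)
  field_simp
  ring

/-- If `I = [a,b]` and `I'' = [a'',b'']` are disjoint closed intervals with
`dist(I, I'') ≥ |I''| > 0` and `I' = [a',b'] ⊆ I''`, then `f(x') ≤ 4 f(x'')` for every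
`x' ∈ I'` and `x'' ∈ I''`.  The distance hypothesis is expressed as a disjunction over
the two possible relative positions of `I` and `I''`. -/
theorem fInt_comparison (a b a' b' a'' b'' : ℝ)
    (hI : a ≤ b) (hI' : a' ≤ b') (hI'' : a'' < b'')
    (hsub : a'' ≤ a' ∧ b' ≤ b'')
    (hdist : b'' - a'' ≤ a'' - b ∨ b'' - a'' ≤ a - b'') :
    ∀ x' ∈ Set.Icc a' b', ∀ x'' ∈ Set.Icc a'' b'',
      fInt a b x' ≤ 4 * fInt a b x'' := by
  intro x' hx' x'' hx''
  obtain ⟨hx'1, hx'2⟩ := hx'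
  obtain ⟨hx''1, hx''2⟩ := hx''
  obtain ⟨hs1, hs2⟩ := hsub
  rcases hdist with hd | hd
  · -- I is to the left: b < a''
    have hb' : b < x' := by linarith
    have hb'' : b < x'' := by linarith
    rw [fInt_eq a b x' hI (Or.inr hb'), fInt_eq a b x'' hI (Or.inr hb'')]
    have hD' : 0 < (x' - a) * (x' - b) := by
      apply mul_pos <;> linarith
    have hD'' : 0 < (x'' - a) * (x'' - b) := by
      apply mul_pos <;> linarith
    rw [← mul_div_assoc, div_le_div_iff₀ hD' hD'']
    have h1 : x'' - a ≤ 2 * (x' - a) := by linarith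
    have h2 : x'' - b ≤ 2 * (x' - b) := by linarith
    nlinarith [mul_nonneg (by linarith : (0:ℝ) ≤ x''-a) (by linarith : (0:ℝ) ≤ x''-b),
      mul_le_mul h1 h2 (by linarith) (by linarith), sub_nonneg.mpr hI]
  · -- I is to the right: b'' < a
    have ha' : x' < a := by linarith
    have ha'' : x'' < a := by linarith
    rw [fInt_eq a b x' hI (Or.inl ha'), fInt_eq a b x'' hI (Or.inl ha'')]
    have hD' : 0 < (x' - a) * (x' - b) := by
      have : x' - a < 0 := by linarith
      have : x' - b < 0 := by linarith
      nlinarith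
    have hD'' : 0 < (x'' - a) * (x'' - b) := by
      have : x'' - a < 0 := by linarith
      have : x'' - b < 0 := by linarith
      nlinarith
    rw [← mul_div_assoc, div_le_div_iff₀ hD' hD'']
    have h1 : a - x'' ≤ 2 * (a - x') := by linarith
    have h2 : b - x'' ≤ 2 * (b - x') := by linarith
    nlinarith [mul_le_mul h1 h2 (by linarith) (by linarith), sub_nonneg.mpr hI]
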